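/- arXiv:1001.0326 — 5 statements merged into one kernel-verified Lean document; each statement's English description precedes it below -/
import Mathlib

section
/- Let G be a locally compact group with left Haar measure μ, let d be a left-invariant metric on G of at most exponential growth with constants a, b > 0, fix c > b, and set h(g) = e^{-c·d(g,e)} / ∫_G e^{-c·d(x,e)} dμ(x). Then h is a positive integrable function with ∫_G h dμ = 1, and for every g ∈ G and every nonnegative f ∈ L^∞(G): e^{-c·d(g,e)} ∫_G f(z) h(z) dμ(z) ≤ ∫_G f(z) h(gz) dμ(z) ≤ e^{c·d(g,e)} ∫_G f(z) h(z) dμ(z). -/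
open MeasureTheory

/-- Lemma 1 of the paper: with `h(g) = e^{-c·d(g,e)} / ∫ e^{-c·d(x,e)} dμ(x)` for `c > b`,
`h` is a positive integrable function of total integral `1`, and for every `g ∈ G` and
nonnegative bounded measurable `f`,
`e^{-c·d(g,e)} ∫ f·h dμ ≤ ∫ f(z) h(gz) dμ(z) ≤ e^{c·d(g,e)} ∫ f·h dμ`. -/
theorem stmt_4 {G : Type*} [Group G] [TopologicalSpace G] [IsTopologicalGroup G]
    [LocallyCompactSpace G] [SecondCountableTopology G] [MeasurableSpace G] [BorelSpace G]
    (μ : Measure G) [μ.IsHaarMeasure]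
    (d : G → G → ℝ)
    (hd_self : ∀ x y : G, d x y = 0 ↔ x = y)
    (hd_symm : ∀ x y : G, d x y = d y x)
    (hd_tri : ∀ x y z : G, d x z ≤ d x y + d y z)
    (hd_inv : ∀ g x y : G, d (g * x) (g * y) = d x y)
    (hd_meas : ∀ g : G, Measurable fun z : G => d (g * z) 1)
    (a b : ℝ) (ha : 0 < a) (hb : 0 < b)
    (hgrowth : ∀ n : ℕ, 1 ≤ n →
      μ {g : G | d g 1 < (n : ℝ)} ≤ ENNReal.ofReal (a * Real.exp (b * n)))
    (c : ℝ) (hc : b < c)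
    (h : G → ℝ)
    (hdef : ∀ g : G,
      h g = Real.exp (-c * d g 1) / ∫ x, Real.exp (-c * d x 1) ∂μ) :
    (∀ g : G, 0 < h g) ∧ Integrable h μ ∧ (∫ g, h g ∂μ) = 1 ∧
    ∀ (g : G) (f : G → ℝ), Measurable f → (∀ z, 0 ≤ f z) → (∃ M : ℝ, ∀ z, f z ≤ M) →
      Real.exp (-c * d g 1) * ∫ z, f z * h z ∂μ ≤ ∫ z, f z * h (g * z) ∂μ ∧
      ∫ z, f z * h (g * z) ∂μ ≤ Real.exp (c * d g 1) * ∫ z, f z * h z ∂μ := by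
  have hc0 : (0:ℝ) < c := hb.trans hc
  have hD0 : ∀ z : G, 0 ≤ d z 1 := by
    intro z
    have h1 := hd_tri z 1 z
    have h2 : d z z = 0 := (hd_self z z).2 rfl
    have h3 := hd_symm z 1
    linarith
  have hDmeas : Measurable fun z : G => d z 1 := by simpa using hd_meas 1
  set φ : G → ℝ := fun z => Real.exp (-c * d z 1) with hφ
  have hφpos : ∀ z, 0 < φ z := fun z => Real.exp_pos _
  have hφmeas : Measurable φ := (hDmeas.const_mul (-c)).exp
  -- integrability of φ
  have hφint : Integrable φ μ := by
    refine ⟨hφmeas.aestronglyMeasurable, ?_⟩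
    rw [hasFiniteIntegral_iff_ofReal (Filter.Eventually.of_forall fun z => (hφpos z).le)]
    set A : ℕ → Set G := fun n => {z | (n : ℝ) ≤ d z 1 ∧ d z 1 < n + 1} with hA
    have hAmeas : ∀ n, MeasurableSet (A n) :=
      fun n => (measurableSet_le measurable_const hDmeas).inter
        (measurableSet_lt hDmeas measurable_const)
    have hAdisj : Pairwise (Function.onFun Disjoint A) := by
      intro m n hmn
      rw [Function.onFun, Set.disjoint_left]
      rintro z ⟨hm1, hm2⟩ ⟨hn1, hn2⟩
      rcases hmn.lt_or_gt with hlt | hlt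
      · have : (m : ℝ) + 1 ≤ n := by exact_mod_cast hlt
        linarith
      · have : (n : ℝ) + 1 ≤ m := by exact_mod_cast hlt
        linarith
    have hAunion : ⋃ n, A n = Set.univ := by
      ext z
      simp only [Set.mem_iUnion, Set.mem_univ, iff_true]
      exact ⟨⌊d z 1⌋₊, Nat.floor_le (hD0 z), Nat.lt_floor_add_one _⟩
    have key : ∫⁻ z, ENNReal.ofReal (φ z) ∂μ
        = ∑' n, ∫⁻ z in A n, ENNReal.ofReal (φ z) ∂μ := by
      rw [← setLIntegral_univ, ← hAunion, lintegral_iUnion hAmeas hAdisj]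
    rw [key]
    set v : ℕ → ℝ := fun n => (a * Real.exp b) * Real.exp (b - c) ^ n with hv
    have hvnonneg : ∀ n, 0 ≤ v n := fun n => by positivity
    have hvsummable : Summable v :=
      (summable_geometric_of_lt_one (Real.exp_nonneg _)
        (Real.exp_lt_one_iff.2 (by linarith))).mul_left _
    have hbound : ∀ n : ℕ, ∫⁻ z in A n, ENNReal.ofReal (φ z) ∂μ ≤ ENNReal.ofReal (v n) := by
      intro n
      have step1 : ∫⁻ z in A n, ENNReal.ofReal (φ z) ∂μ
          ≤ ∫⁻ _ in A n, ENNReal.ofReal (Real.exp (-c * n)) ∂μ := by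
        refine setLIntegral_mono measurable_const fun z hz => ?_
        refine ENNReal.ofReal_le_ofReal (Real.exp_le_exp.2 ?_)
        have := hz.1
        nlinarith
      have step2 : μ (A n) ≤ ENNReal.ofReal (a * Real.exp (b * (n + 1))) := by
        have hsub : A n ⊆ {g : G | d g 1 < ((n + 1 : ℕ) : ℝ)} := by
          intro z hz
          simp only [Set.mem_setOf_eq]
          push_cast
          exact hz.2
        calc μ (A n) ≤ μ {g : G | d g 1 < ((n + 1 : ℕ) : ℝ)} := measure_mono hsub
          _ ≤ ENNReal.ofReal (a * Real.exp (b * (n + 1 : ℕ))) :=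
              hgrowth (n + 1) (Nat.le_add_left 1 n)
          _ = ENNReal.ofReal (a * Real.exp (b * (n + 1))) := by push_cast; ring_nf
      calc ∫⁻ z in A n, ENNReal.ofReal (φ z) ∂μ
          ≤ ∫⁻ _ in A n, ENNReal.ofReal (Real.exp (-c * n)) ∂μ := step1
        _ = ENNReal.ofReal (Real.exp (-c * n)) * μ (A n) := setLIntegral_const _ _
        _ ≤ ENNReal.ofReal (Real.exp (-c * n)) * ENNReal.ofReal (a * Real.exp (b * (n + 1))) :=
            mul_le_mul_right step2 _
        _ = ENNReal.ofReal (Real.exp (-c * n) * (a * Real.exp (b * (n + 1)))) :=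
            (ENNReal.ofReal_mul (Real.exp_nonneg _)).symm
        _ = ENNReal.ofReal (v n) := by
            congr 1
            show Real.exp (-c * n) * (a * Real.exp (b * (n + 1)))
              = a * Real.exp b * Real.exp (b - c) ^ n
            have e1 : Real.exp (-c * n) * (a * Real.exp (b * (n + 1)))
                = a * Real.exp (-c * n + b * (n + 1)) := by rw [Real.exp_add]; ring
            have e2 : a * Real.exp b * Real.exp (b - c) ^ n
                = a * Real.exp (b + n * (b - c)) := by
              rw [← Real.exp_nat_mul, mul_assoc, ← Real.exp_add]
            rw [e1, e2]
            ring_nf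
    calc ∑' n, ∫⁻ z in A n, ENNReal.ofReal (φ z) ∂μ
        ≤ ∑' n, ENNReal.ofReal (v n) := ENNReal.tsum_le_tsum hbound
      _ = ENNReal.ofReal (∑' n, v n) := (ENNReal.ofReal_tsum_of_nonneg hvnonneg hvsummable).symm
      _ < ⊤ := ENNReal.ofReal_lt_top
  set I : ℝ := ∫ x, Real.exp (-c * d x 1) ∂μ with hI
  have hIpos : 0 < I := by
    rw [hI]
    rw [integral_pos_iff_support_of_nonneg (fun z => (hφpos z).le) hφint]
    have : Function.support φ = Set.univ := by
      ext z; simp [Function.mem_support, (hφpos z).ne']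
    rw [show (Function.support fun x => Real.exp (-c * d x 1)) = Set.univ from this]
    exact isOpen_univ.measure_pos μ ⟨1, trivial⟩
  have hh : h = fun z => φ z / I := funext hdef
  subst hh
  refine ⟨fun g => div_pos (hφpos g) hIpos, hφint.div_const I, ?_, ?_⟩
  · rw [integral_div]
    exact div_self hIpos.ne'
  · -- pointwise bounds on φ (g*z)
    have keyφ : ∀ g z : G, Real.exp (-c * d g 1) * φ z ≤ φ (g * z) ∧
        φ (g * z) ≤ Real.exp (c * d g 1) * φ z := by
      intro g z
      have e1 : d (g * z) g = d z 1 := by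
        have := hd_inv g z 1
        rwa [mul_one] at this
      have tri1 : d (g * z) 1 ≤ d z 1 + d g 1 := by
        have := hd_tri (g * z) g 1
        rwa [e1] at this
      have tri2 : d z 1 ≤ d (g * z) 1 + d g 1 := by
        have := hd_tri (g * z) 1 g
        rw [e1, hd_symm 1 g] at this
        linarith
      constructor
      · rw [← Real.exp_add]
        exact Real.exp_le_exp.2 (by nlinarith)
      · rw [← Real.exp_add]
        exact Real.exp_le_exp.2 (by nlinarith)
    rintro g f hfm hf0 ⟨M, hM⟩
    have hM0 : 0 ≤ M := (hf0 1).trans (hM 1)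
    have hgφmeas : Measurable fun z => φ (g * z) := ((hd_meas g).const_mul (-c)).exp
    have int1 : Integrable (fun z => f z * (φ z / I)) μ := by
      refine (hφint.div_const I).bdd_mul hfm.aestronglyMeasurable (c := M) (Filter.Eventually.of_forall fun z => ?_)
      rw [Real.norm_of_nonneg (hf0 z)]; exact hM z
    set K : ℝ := Real.exp (c * d g 1) with hK
    have hK0 : 0 < K := Real.exp_pos _
    have int2 : Integrable (fun z => f z * (φ (g * z) / I)) μ := by
      refine Integrable.mono ((hφint.div_const I).const_mul (M * K))
        (hfm.mul (hgφmeas.div_const I)).aestronglyMeasurable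
        (Filter.Eventually.of_forall fun z => ?_)
      have h1 : 0 ≤ φ (g * z) / I := by positivity
      have h2 : φ (g * z) / I ≤ K * (φ z / I) := by
        calc φ (g * z) / I ≤ (K * φ z) / I :=
              div_le_div_of_nonneg_right ((keyφ g z).2) hIpos.le
          _ = K * (φ z / I) := mul_div_assoc _ _ _
      have h3 : 0 ≤ φ z / I := by positivity
      rw [Real.norm_of_nonneg (mul_nonneg (hf0 z) h1),
        Real.norm_of_nonneg (by positivity : (0:ℝ) ≤ M * K * (φ z / I))]
      calc f z * (φ (g * z) / I) ≤ f z * (K * (φ z / I)) :=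
            mul_le_mul_of_nonneg_left h2 (hf0 z)
        _ ≤ M * (K * (φ z / I)) :=
            mul_le_mul_of_nonneg_right (hM z) (by positivity)
        _ = M * K * (φ z / I) := by ring
    constructor
    · beta_reduce
      rw [← integral_const_mul]
      refine integral_mono (int1.const_mul _) int2 fun z => ?_
      have h1 : Real.exp (-c * d g 1) * (φ z / I) ≤ φ (g * z) / I := by
        calc Real.exp (-c * d g 1) * (φ z / I) = (Real.exp (-c * d g 1) * φ z) / I :=
              (mul_div_assoc _ _ _).symm
          _ ≤ φ (g * z) / I := div_le_div_of_nonneg_right ((keyφ g z).1) hIpos.le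
      calc Real.exp (-c * d g 1) * (f z * (φ z / I))
          = f z * (Real.exp (-c * d g 1) * (φ z / I)) := by ring
        _ ≤ f z * (φ (g * z) / I) := mul_le_mul_of_nonneg_left h1 (hf0 z)
    · beta_reduce
      rw [← integral_const_mul]
      refine integral_mono int2 (int1.const_mul _) fun z => ?_
      have h2 : φ (g * z) / I ≤ K * (φ z / I) := by
        calc φ (g * z) / I ≤ (K * φ z) / I :=
              div_le_div_of_nonneg_right ((keyφ g z).2) hIpos.le
          _ = K * (φ z / I) := mul_div_assoc _ _ _
      calc f z * (φ (g * z) / I) ≤ f z * (K * (φ z / I)) :=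
            mul_le_mul_of_nonneg_left h2 (hf0 z)
        _ = K * (f z * (φ z / I)) := by ring
end

section
/- Let G be a locally compact group with left Haar measure μ, H a Hilbert space, and R : G → H a bounded continuous map. Let h : G → (0,∞) be integrable with ∫ h dμ = 1, and define R'(x) ∈ L²(G, H, μ) by R'(x)(z) = √(h(z)) · R(z⁻¹ x). Then R' is continuous from G to L²(G, H, μ) and ‖R'(x)‖₂ ≤ sup_{g∈G} ‖R(g)‖ for all x ∈ G. -/
open MeasureTheory

/-- If `R : G → H` is bounded and continuous, `h > 0` is integrable with `∫ h dμ = 1`,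
and `R'(x)(z) = √(h z) • R(z⁻¹ x)`, then each `R'(x)` lies in `L²(G, H, μ)`, the map
`x ↦ R'(x)` is continuous into `L²(G, H, μ)`, and `‖R'(x)‖₂ ≤ sup_g ‖R g‖`. -/
theorem stmt_5 {G : Type*} [Group G] [TopologicalSpace G] [IsTopologicalGroup G]
    [LocallyCompactSpace G] [SecondCountableTopology G] [MeasurableSpace G] [BorelSpace G]
    (μ : Measure G) [μ.IsHaarMeasure]
    {H : Type*} [NormedAddCommGroup H] [InnerProductSpace ℂ H] [CompleteSpace H]
    (R : G → H) (hR_cont : Continuous R) (hR_bdd : BddAbove (Set.range fun g => ‖R g‖))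
    (h : G → ℝ) (h_pos : ∀ z, 0 < h z) (h_int : Integrable h μ) (h_one : (∫ z, h z ∂μ) = 1) :
    ∃ hmem : ∀ x : G, MemLp (fun z => Real.sqrt (h z) • R (z⁻¹ * x)) 2 μ,
      Continuous (fun x : G => (hmem x).toLp (fun z => Real.sqrt (h z) • R (z⁻¹ * x))) ∧
      ∀ x : G, ‖(hmem x).toLp (fun z => Real.sqrt (h z) • R (z⁻¹ * x))‖ ≤ ⨆ g : G, ‖R g‖ := by
  set M : ℝ := ⨆ g : G, ‖R g‖ with hM_def
  have hM : ∀ g : G, ‖R g‖ ≤ M := fun g => le_ciSup hR_bdd g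
  have hM0 : 0 ≤ M := (norm_nonneg _).trans (hM 1)
  -- a.e. strong measurability of the functions
  have hsqrt_aesm : AEStronglyMeasurable (fun z => Real.sqrt (h z)) μ :=
    Real.continuous_sqrt.comp_aestronglyMeasurable h_int.1
  have haesm : ∀ x : G, AEStronglyMeasurable (fun z => Real.sqrt (h z) • R (z⁻¹ * x)) μ := by
    intro x
    exact hsqrt_aesm.smul
      ((hR_cont.comp ((continuous_inv).mul continuous_const)).aestronglyMeasurable)
  -- the dominating function is in L²
  have hg_int : Integrable (fun z => (Real.sqrt (h z) * M) ^ 2) μ := by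
    have : (fun z => (Real.sqrt (h z) * M) ^ 2) = fun z => h z * M ^ 2 := by
      funext z
      rw [mul_pow, Real.sq_sqrt (h_pos z).le]
    rw [this]
    exact h_int.mul_const _
  have hg_mem : MemLp (fun z => Real.sqrt (h z) * M) 2 μ :=
    (memLp_two_iff_integrable_sq (hsqrt_aesm.mul_const M)).2 hg_int
  -- pointwise bound
  have hbd : ∀ x z, ‖Real.sqrt (h z) • R (z⁻¹ * x)‖ ≤ ‖Real.sqrt (h z) * M‖ := by
    intro x z
    rw [norm_smul, Real.norm_eq_abs, abs_of_nonneg (Real.sqrt_nonneg _), Real.norm_eq_abs,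
      abs_of_nonneg (mul_nonneg (Real.sqrt_nonneg _) hM0)]
    exact mul_le_mul_of_nonneg_left (hM _) (Real.sqrt_nonneg _)
  have hmem : ∀ x : G, MemLp (fun z => Real.sqrt (h z) • R (z⁻¹ * x)) 2 μ := fun x =>
    hg_mem.of_le (haesm x) (Filter.Eventually.of_forall (hbd x))
  refine ⟨hmem, ?_, ?_⟩
  · -- continuity
    -- measurable representative of h
    set h' : G → ℝ := h_int.1.mk h with hh'_def
    have h'_meas : Measurable h' := h_int.1.stronglyMeasurable_mk.measurable
    have hh' : h =ᵐ[μ] h' := h_int.1.ae_eq_mk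
    rw [continuous_iff_continuousAt]
    intro x₀
    rw [ContinuousAt, tendsto_iff_dist_tendsto_zero]
    have hdist : ∀ x : G,
        dist ((hmem x).toLp _) ((hmem x₀).toLp _) =
          (eLpNorm (fun z => Real.sqrt (h z) • R (z⁻¹ * x)
            - Real.sqrt (h z) • R (z⁻¹ * x₀)) 2 μ).toReal := by
      intro x
      rw [dist_eq_norm, ← MemLp.toLp_sub (hmem x) (hmem x₀), Lp.norm_toLp]
      rfl
    simp only [hdist]
    -- the squared integrands
    have key : Filter.Tendsto (fun x => eLpNorm (fun z => Real.sqrt (h z) • R (z⁻¹ * x)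
        - Real.sqrt (h z) • R (z⁻¹ * x₀)) 2 μ) (nhds x₀) (nhds 0) := by
      have heq : ∀ x : G, eLpNorm (fun z => Real.sqrt (h z) • R (z⁻¹ * x)
          - Real.sqrt (h z) • R (z⁻¹ * x₀)) 2 μ
          = (∫⁻ z, (‖Real.sqrt (h' z) • R (z⁻¹ * x)
              - Real.sqrt (h' z) • R (z⁻¹ * x₀)‖₊ : ENNReal) ^ (2 : ℝ) ∂μ) ^ (1 / (2 : ℝ)) := by
        intro x
        rw [eLpNorm_eq_lintegral_rpow_enorm_toReal (by norm_num) (by norm_num)]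
        simp only [ENNReal.toReal_ofNat]
        congr 1
        apply lintegral_congr_ae
        filter_upwards [hh'] with z hz
        rw [hz, enorm_eq_nnnorm]
      simp only [heq]
      have hlim0 : Filter.Tendsto (fun x => ∫⁻ z, (‖Real.sqrt (h' z) • R (z⁻¹ * x)
          - Real.sqrt (h' z) • R (z⁻¹ * x₀)‖₊ : ENNReal) ^ (2 : ℝ) ∂μ) (nhds x₀)
          (nhds 0) := by
        have h0 : (0 : ENNReal) = ∫⁻ _, (0 : ENNReal) ∂μ := by simp
        rw [h0]
        apply tendsto_lintegral_filter_of_dominated_convergence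
          (fun z => ENNReal.ofReal ((Real.sqrt (h' z)) ^ 2 * (2 * M) ^ 2))
        · -- measurability
          apply Filter.Eventually.of_forall
          intro x
          have hsm : StronglyMeasurable fun z => Real.sqrt (h' z) • R (z⁻¹ * x)
              - Real.sqrt (h' z) • R (z⁻¹ * x₀) := by
            apply StronglyMeasurable.sub
            · exact ((h'_meas.sqrt).stronglyMeasurable).smul
                (hR_cont.comp ((continuous_inv).mul continuous_const)).stronglyMeasurable
            · exact ((h'_meas.sqrt).stronglyMeasurable).smul
                (hR_cont.comp ((continuous_inv).mul continuous_const)).stronglyMeasurable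
          exact ENNReal.continuous_rpow_const.measurable.comp hsm.enorm
        · -- bound
          apply Filter.Eventually.of_forall
          intro x
          apply Filter.Eventually.of_forall
          intro z
          rw [← smul_sub, ← enorm_eq_nnnorm, ← ofReal_norm,
            ENNReal.ofReal_rpow_of_nonneg (norm_nonneg _) (by norm_num)]
          apply ENNReal.ofReal_le_ofReal
          have h1 : ‖Real.sqrt (h' z) • (R (z⁻¹ * x) - R (z⁻¹ * x₀))‖
              ≤ Real.sqrt (h' z) * (2 * M) := by
            rw [norm_smul, Real.norm_eq_abs, abs_of_nonneg (Real.sqrt_nonneg _)]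
            apply mul_le_mul_of_nonneg_left _ (Real.sqrt_nonneg _)
            calc ‖R (z⁻¹ * x) - R (z⁻¹ * x₀)‖ ≤ ‖R (z⁻¹ * x)‖ + ‖R (z⁻¹ * x₀)‖ :=
                norm_sub_le _ _
              _ ≤ M + M := add_le_add (hM _) (hM _)
              _ = 2 * M := by ring
          calc ‖Real.sqrt (h' z) • (R (z⁻¹ * x) - R (z⁻¹ * x₀))‖ ^ (2 : ℝ)
              = ‖Real.sqrt (h' z) • (R (z⁻¹ * x) - R (z⁻¹ * x₀))‖ ^ (2 : ℕ) := by
                rw [← Real.rpow_natCast]; norm_num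
            _ ≤ (Real.sqrt (h' z) * (2 * M)) ^ (2 : ℕ) :=
                pow_le_pow_left₀ (norm_nonneg _) h1 2
            _ = (Real.sqrt (h' z)) ^ 2 * (2 * M) ^ 2 := by ring
        · -- finiteness of the bound integral
          have heq2 : ∫⁻ z, ENNReal.ofReal ((Real.sqrt (h' z)) ^ 2 * (2 * M) ^ 2) ∂μ
              = ∫⁻ z, ENNReal.ofReal (h z * (2 * M) ^ 2) ∂μ := by
            apply lintegral_congr_ae
            filter_upwards [hh'] with z hz
            rw [← hz, Real.sq_sqrt (h_pos z).le]
          rw [heq2, ← ofReal_integral_eq_lintegral_ofReal (h_int.mul_const _)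
            (Filter.Eventually.of_forall fun z =>
              mul_nonneg (h_pos z).le (by positivity))]
          exact ENNReal.ofReal_ne_top
        · -- a.e. convergence
          apply Filter.Eventually.of_forall
          intro z
          have hc : ContinuousAt (fun x => (‖Real.sqrt (h' z) • R (z⁻¹ * x)
              - Real.sqrt (h' z) • R (z⁻¹ * x₀)‖₊ : ENNReal) ^ (2 : ℝ)) x₀ := by
            apply ENNReal.continuous_rpow_const.continuousAt.comp
            apply (ENNReal.continuous_coe.comp _).continuousAt
            apply Continuous.nnnorm
            exact ((continuous_const.smul (hR_cont.comp (continuous_mul_left z⁻¹))).sub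
              continuous_const)
          have hval : (‖Real.sqrt (h' z) • R (z⁻¹ * x₀)
              - Real.sqrt (h' z) • R (z⁻¹ * x₀)‖₊ : ENNReal) ^ (2 : ℝ) = 0 := by
            simp [ENNReal.rpow_eq_zero_iff]
          simpa [hval] using hc.tendsto
      have hcont : Filter.Tendsto (fun a : ENNReal => a ^ (1 / (2 : ℝ))) (nhds 0)
          (nhds ((0 : ENNReal) ^ (1 / (2 : ℝ)))) :=
        ENNReal.continuous_rpow_const.continuousAt
      have h0pow : ((0 : ENNReal)) ^ (1 / (2 : ℝ)) = 0 := by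
        rw [ENNReal.zero_rpow_of_pos (by norm_num)]
      rw [h0pow] at hcont
      exact hcont.comp hlim0
    have htoReal : Filter.Tendsto ENNReal.toReal (nhds (0 : ENNReal)) (nhds 0) := by
      simpa using ENNReal.tendsto_toReal (a := 0) (by simp)
    exact htoReal.comp key
  · -- norm bound
    intro x
    rw [Lp.norm_toLp]
    have hle : eLpNorm (fun z => Real.sqrt (h z) • R (z⁻¹ * x)) 2 μ
        ≤ eLpNorm (fun z => Real.sqrt (h z) * M) 2 μ := eLpNorm_mono (hbd x)
    have heq : eLpNorm (fun z => Real.sqrt (h z) * M) 2 μ = ENNReal.ofReal M := by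
      rw [eLpNorm_eq_lintegral_rpow_enorm_toReal (by norm_num) (by norm_num)]
      have h1 : ∫⁻ z, (‖Real.sqrt (h z) * M‖₊ : ENNReal) ^ ((2 : ENNReal).toReal) ∂μ
          = ENNReal.ofReal (M ^ 2) := by
        have h2 : ∀ z, (‖Real.sqrt (h z) * M‖₊ : ENNReal) ^ ((2 : ENNReal).toReal)
            = ENNReal.ofReal (h z * M ^ 2) := by
          intro z
          rw [← enorm_eq_nnnorm, ← ofReal_norm,
            ENNReal.ofReal_rpow_of_nonneg (norm_nonneg _) (by norm_num)]
          congr 1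
          rw [Real.norm_eq_abs, abs_of_nonneg (mul_nonneg (Real.sqrt_nonneg _) hM0)]
          rw [show ((2 : ENNReal).toReal) = ((2 : ℕ) : ℝ) by norm_num, Real.rpow_natCast,
            mul_pow, Real.sq_sqrt (h_pos z).le]
        simp only [h2]
        rw [← ofReal_integral_eq_lintegral_ofReal (h_int.mul_const _)
          (Filter.Eventually.of_forall fun z => mul_nonneg (h_pos z).le (by positivity))]
        rw [integral_mul_const, h_one, one_mul]
      simp only [enorm_eq_nnnorm]
      rw [h1, show (1 / ENNReal.toReal 2) = ((2 : ℝ)⁻¹) by norm_num,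
        ENNReal.ofReal_rpow_of_nonneg (sq_nonneg M) (by norm_num)]
      congr 1
      rw [← Real.rpow_natCast M 2, ← Real.rpow_mul hM0,
        show (((2 : ℕ) : ℝ) * (2 : ℝ)⁻¹) = 1 by norm_num, Real.rpow_one]
    calc (eLpNorm (fun z => Real.sqrt (h z) • R (z⁻¹ * x)) 2 μ).toReal
        ≤ (ENNReal.ofReal M).toReal := by
          apply ENNReal.toReal_mono ENNReal.ofReal_ne_top
          rw [← heq]; exact hle
      _ = M := ENNReal.toReal_ofReal hM0
end

section
/- Let G be a locally compact group with left Haar measure μ, let d be a left-invariant metric on G, let c > 0, and let h(z) = e^{-c·d(z,e)}/N for a positive normalizing constant N (assumed finite). Let H be a Hilbert space, R : G → H bounded and continuous, and define R'(x)(z) = √(h(z))·R(z⁻¹x) in L²(G,H,μ). Then for every g ∈ G and every finite linear combination, ‖Σᵢ cᵢ R'(g xᵢ)‖₂² ≤ e^{c·d(g,e)} · ‖Σᵢ cᵢ R'(xᵢ)‖₂², for all n ∈ ℕ, x₁,…,xₙ ∈ G and c₁,…,cₙ ∈ ℂ. -/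
open MeasureTheory

/-- With `h(z) = e^{-c·d(z,e)}/N` and `R'(x)(z) = √(h z) • R(z⁻¹x)`, for every `g ∈ G`
and every finite linear combination,
`‖Σᵢ cᵢ R'(g xᵢ)‖₂² ≤ e^{c·d(g,e)} ‖Σᵢ cᵢ R'(xᵢ)‖₂²`. -/
theorem stmt_6 {G : Type*} [Group G] [TopologicalSpace G] [IsTopologicalGroup G]
    [LocallyCompactSpace G] [SecondCountableTopology G] [MeasurableSpace G] [BorelSpace G]
    (μ : Measure G) [μ.IsHaarMeasure]
    (d : G → G → ℝ)
    (hd_self : ∀ x y : G, d x y = 0 ↔ x = y)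
    (hd_symm : ∀ x y : G, d x y = d y x)
    (hd_tri : ∀ x y z : G, d x z ≤ d x y + d y z)
    (hd_inv : ∀ g x y : G, d (g * x) (g * y) = d x y)
    (hd_meas : Measurable fun z : G => d z 1)
    (c : ℝ) (hc : 0 < c)
    (N : ℝ) (hN : N = ∫ x, Real.exp (-c * d x 1) ∂μ) (hN_pos : 0 < N)
    (hN_int : Integrable (fun x => Real.exp (-c * d x 1)) μ)
    {H : Type*} [NormedAddCommGroup H] [InnerProductSpace ℂ H] [CompleteSpace H]
    (R : G → H) (hR_cont : Continuous R) (hR_bdd : BddAbove (Set.range fun g => ‖R g‖))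
    (h : G → ℝ) (hdef : ∀ z : G, h z = Real.exp (-c * d z 1) / N)
    (g : G) (n : ℕ) (x : Fin n → G) (coef : Fin n → ℂ) :
    ∫ z, ‖∑ i, coef i • (Real.sqrt (h z) • R (z⁻¹ * (g * x i)))‖ ^ 2 ∂μ ≤
      Real.exp (c * d g 1) *
        ∫ z, ‖∑ i, coef i • (Real.sqrt (h z) • R (z⁻¹ * x i))‖ ^ 2 ∂μ := by
  have h_nonneg : ∀ z, 0 ≤ h z := fun z => by
    rw [hdef]; positivity
  have key : ∀ (z : G) (v : Fin n → H),
      ‖∑ i, coef i • (Real.sqrt (h z) • v i)‖ ^ 2 = h z * ‖∑ i, coef i • v i‖ ^ 2 := by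
    intro z v
    have e1 : ∑ i, coef i • (Real.sqrt (h z) • v i)
        = Real.sqrt (h z) • ∑ i, coef i • v i := by
      rw [Finset.smul_sum]
      exact Finset.sum_congr rfl fun i _ => smul_comm _ _ _
    rw [e1, norm_smul, mul_pow, Real.norm_eq_abs, sq_abs, Real.sq_sqrt (h_nonneg z)]
  set Q : G → ℝ := fun w => ‖∑ i, coef i • R (w⁻¹ * x i)‖ ^ 2 with hQ
  have hQ_nonneg : ∀ w, 0 ≤ Q w := fun w => by positivity
  -- rewrite LHS via change of variables
  have hLHS : (∫ z, ‖∑ i, coef i • (Real.sqrt (h z) • R (z⁻¹ * (g * x i)))‖ ^ 2 ∂μ)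
      = ∫ w, h (g * w) * Q w ∂μ := by
    rw [← MeasureTheory.integral_mul_left_eq_self (fun w => h (g * w) * Q w) g⁻¹]
    refine integral_congr_ae (Filter.Eventually.of_forall fun z => ?_)
    show ‖∑ i, coef i • (Real.sqrt (h z) • R (z⁻¹ * (g * x i)))‖ ^ 2
        = h (g * (g⁻¹ * z)) * Q (g⁻¹ * z)
    rw [key]
    simp only [hQ, mul_inv_cancel_left, mul_inv_rev, inv_inv, mul_assoc]
  have hRHS : (∫ z, ‖∑ i, coef i • (Real.sqrt (h z) • R (z⁻¹ * x i))‖ ^ 2 ∂μ)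
      = ∫ w, h w * Q w ∂μ := by
    refine integral_congr_ae (Filter.Eventually.of_forall fun z => ?_)
    show ‖∑ i, coef i • (Real.sqrt (h z) • R (z⁻¹ * x i))‖ ^ 2 = h z * Q z
    rw [key]
  rw [hLHS, hRHS, ← MeasureTheory.integral_const_mul]
  -- pointwise bound
  have hpt : ∀ w, h (g * w) * Q w ≤ Real.exp (c * d g 1) * (h w * Q w) := by
    intro w
    have hd1 : d w 1 ≤ d (g * w) 1 + d g 1 := by
      have e2 : d (g * w) g = d w 1 := by
        have := hd_inv g w 1
        rwa [mul_one] at this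
      calc d w 1 = d (g * w) g := e2.symm
        _ ≤ d (g * w) 1 + d 1 g := hd_tri _ _ _
        _ = d (g * w) 1 + d g 1 := by rw [hd_symm 1 g]
    have hh : h (g * w) ≤ Real.exp (c * d g 1) * h w := by
      rw [hdef, hdef, ← mul_div_assoc]
      refine div_le_div_of_nonneg_right ?_ hN_pos.le
      rw [← Real.exp_add]
      refine Real.exp_le_exp.mpr ?_
      nlinarith [hd1]
    calc h (g * w) * Q w ≤ (Real.exp (c * d g 1) * h w) * Q w :=
          mul_le_mul_of_nonneg_right hh (hQ_nonneg w)
      _ = Real.exp (c * d g 1) * (h w * Q w) := by ring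
  -- integrability of the majorant
  obtain ⟨M, hM⟩ := hR_bdd
  have hM' : ∀ y : G, ‖R y‖ ≤ M := fun y => hM ⟨y, rfl⟩
  have hM0 : 0 ≤ M := le_trans (norm_nonneg _) (hM' 1)
  have hh_int : Integrable h μ := by
    have := hN_int.div_const N
    have e3 : (fun z => Real.exp (-c * d z 1) / N) = h := funext fun z => (hdef z).symm
    rwa [e3] at this
  have hQ_cont : Continuous Q := by
    apply Continuous.pow
    apply Continuous.norm
    apply continuous_finset_sum
    intro i _
    exact (hR_cont.comp ((continuous_inv.mul continuous_const))).const_smul _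
  have hQ_bdd : ∀ w, ‖Q w‖ ≤ ((∑ i, ‖coef i‖) * M) ^ 2 := by
    intro w
    rw [Real.norm_eq_abs, abs_of_nonneg (hQ_nonneg w)]
    have hb : ‖∑ i, coef i • R (w⁻¹ * x i)‖ ≤ (∑ i, ‖coef i‖) * M := by
      calc ‖∑ i, coef i • R (w⁻¹ * x i)‖ ≤ ∑ i, ‖coef i • R (w⁻¹ * x i)‖ :=
            norm_sum_le _ _
        _ ≤ ∑ i, ‖coef i‖ * M := by
            refine Finset.sum_le_sum fun i _ => ?_
            rw [norm_smul]
            exact mul_le_mul_of_nonneg_left (hM' _) (norm_nonneg _)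
        _ = (∑ i, ‖coef i‖) * M := by rw [Finset.sum_mul]
    exact pow_le_pow_left₀ (norm_nonneg _) hb 2
  have h_int : Integrable (fun w => Real.exp (c * d g 1) * (h w * Q w)) μ := by
    refine Integrable.const_mul ?_ _
    have : Integrable (fun w => Q w * h w) μ :=
      hh_int.bdd_mul hQ_cont.aestronglyMeasurable (Filter.Eventually.of_forall hQ_bdd)
    exact this.congr (Filter.Eventually.of_forall fun w => mul_comm _ _)
  exact integral_mono_of_nonneg
    (Filter.Eventually.of_forall fun w => mul_nonneg (h_nonneg _) (hQ_nonneg w))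
    h_int (Filter.Eventually.of_forall hpt)
end

section
/- Let G be a locally compact group, μ a left Haar measure, d a left-invariant metric of at most exponential growth with constants a, b > 0, and c > b. Let H be a Hilbert space and R : G → H bounded and continuous; define R'(x)(z) = √(h(z))·R(z⁻¹x) with h(z) = e^{-c·d(z,e)}/∫ e^{-c·d(x,e)}dμ(x), and let K_R be the closed linear span of {R'(x) : x ∈ G} in L²(G,H,μ). Then there exists a unique strongly continuous representation π_R of G on K_R such that π_R(g) R'(x) = R'(gx) for all g, x ∈ G, and moreover ‖π_R(g)‖ ≤ e^{(c/2)·d(g,e)} for all g ∈ G. -/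
open MeasureTheory

section Aux
set_option linter.unusedSectionVars false
variable {G : Type*} [Group G] [MeasurableSpace G] [MeasurableMul G]
  {H : Type*} [NormedAddCommGroup H] [InnerProductSpace ℂ H] [CompleteSpace H]
  (μ : Measure G) [μ.IsMulLeftInvariant]

theorem tfun_aemeas {w : G → ℝ} (hw : Measurable w) (g : G) {F : G → H}
    (hF : AEStronglyMeasurable F μ) :
    AEStronglyMeasurable (fun z => w z • F (g⁻¹ * z)) μ :=
  hw.aestronglyMeasurable.smul
    (hF.comp_quasiMeasurePreserving (measurePreserving_mul_left μ g⁻¹).quasiMeasurePreserving)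

theorem tfun_eLpNorm_le {w : G → ℝ} (g : G) {C : ℝ} (hC : ∀ z, |w z| ≤ C) {F : G → H}
    (hF : AEStronglyMeasurable F μ) :
    eLpNorm (fun z => w z • F (g⁻¹ * z)) 2 μ ≤ ENNReal.ofReal C * eLpNorm F 2 μ := by
  have h0C : 0 ≤ C := le_trans (abs_nonneg _) (hC 1)
  have h1 : eLpNorm (fun z => w z • F (g⁻¹ * z)) 2 μ
      ≤ eLpNorm (fun z => C • F (g⁻¹ * z)) 2 μ := by
    refine eLpNorm_mono fun z => ?_
    rw [norm_smul, norm_smul, Real.norm_eq_abs, Real.norm_eq_abs, abs_of_nonneg h0C]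
    exact mul_le_mul_of_nonneg_right (hC z) (norm_nonneg _)
  refine h1.trans ?_
  have h2 : (fun z => C • F (g⁻¹ * z)) = C • (fun z => F (g⁻¹ * z)) := rfl
  have h3 : (fun z => F (g⁻¹ * z)) = F ∘ (fun z => g⁻¹ * z) := rfl
  rw [h2, eLpNorm_const_smul, h3,
    eLpNorm_comp_measurePreserving hF (measurePreserving_mul_left μ g⁻¹)]
  gcongr
  simp [ENNReal.ofReal, Real.toNNReal, ← NNReal.coe_le_coe, abs_of_nonneg h0C]

theorem tfun_memLp {w : G → ℝ} (hw : Measurable w) (g : G) {C : ℝ} (hC : ∀ z, |w z| ≤ C)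
    {F : G → H} (hF : MemLp F 2 μ) : MemLp (fun z => w z • F (g⁻¹ * z)) 2 μ :=
  ⟨tfun_aemeas μ hw g hF.1,
    lt_of_le_of_lt (tfun_eLpNorm_le μ g hC hF.1)
      (ENNReal.mul_lt_top ENNReal.ofReal_lt_top hF.2)⟩

theorem tfun_congr_ae (w : G → ℝ) (g : G) {F F' : G → H} (hFF' : F =ᵐ[μ] F') :
    (fun z => w z • F (g⁻¹ * z)) =ᵐ[μ] (fun z => w z • F' (g⁻¹ * z)) := by
  have hτ : μ.map (fun z => g⁻¹ * z) = μ := (measurePreserving_mul_left μ g⁻¹).map_eq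
  have h1 : (fun z : G => F (g⁻¹ * z)) =ᵐ[μ] (fun z => F' (g⁻¹ * z)) :=
    MeasureTheory.ae_eq_comp (f := fun z : G => g⁻¹ * z) (g := F) (g' := F')
      (measurable_const_mul g⁻¹).aemeasurable (by rwa [hτ])
  filter_upwards [h1] with z hz using by simp only [hz]

variable {w : G → ℝ} {C : ℝ}
variable (hw : Measurable w) (g : G) (hC0 : 0 ≤ C) (hC : ∀ z, |w z| ≤ C)

noncomputable def wtOp0 (F : Lp H 2 μ) : Lp H 2 μ :=
  (tfun_memLp μ hw g hC (Lp.memLp F)).toLp (fun z => w z • (F : G → H) (g⁻¹ * z))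

theorem wtOp0_coeFn (F : Lp H 2 μ) :
    wtOp0 μ hw g hC F =ᵐ[μ] fun z => w z • (F : G → H) (g⁻¹ * z) :=
  MemLp.coeFn_toLp _

theorem wtOp0_add (F F' : Lp H 2 μ) :
    wtOp0 μ hw g hC (F + F') = wtOp0 μ hw g hC F + wtOp0 μ hw g hC F' := by
  unfold wtOp0
  rw [← MemLp.toLp_add]
  refine MemLp.toLp_congr _ _ ?_
  filter_upwards [tfun_congr_ae μ w g (Lp.coeFn_add F F')] with z hz
  rw [hz]
  simp only [Pi.add_apply, smul_add]

theorem wtOp0_smul (m : ℂ) (F : Lp H 2 μ) :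
    wtOp0 μ hw g hC (m • F) = m • wtOp0 μ hw g hC F := by
  unfold wtOp0
  rw [← MemLp.toLp_const_smul m]
  refine MemLp.toLp_congr _ _ ?_
  filter_upwards [tfun_congr_ae μ w g (Lp.coeFn_smul m F)] with z hz
  rw [hz]
  simp only [Pi.smul_apply]
  exact smul_comm _ _ _

include hC0

theorem wtOp0_norm (F : Lp H 2 μ) : ‖wtOp0 μ hw g hC F‖ ≤ C * ‖F‖ := by
  unfold wtOp0
  rw [Lp.norm_toLp, Lp.norm_def]
  have hle := tfun_eLpNorm_le μ g hC (Lp.memLp F).1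
  calc (eLpNorm (fun z => w z • (F : G → H) (g⁻¹ * z)) 2 μ).toReal
      ≤ (ENNReal.ofReal C * eLpNorm (F : G → H) 2 μ).toReal :=
        ENNReal.toReal_mono
          (ENNReal.mul_ne_top ENNReal.ofReal_ne_top (Lp.eLpNorm_ne_top F)) hle
    _ = C * (eLpNorm (F : G → H) 2 μ).toReal := by
        rw [ENNReal.toReal_mul, ENNReal.toReal_ofReal hC0]

/-- weighted translation operator on `L²`. -/
noncomputable def wtOp : Lp H 2 μ →L[ℂ] Lp H 2 μ :=
  LinearMap.mkContinuous
    { toFun := wtOp0 μ hw g hC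
      map_add' := wtOp0_add μ hw g hC
      map_smul' := wtOp0_smul μ hw g hC }
    C (wtOp0_norm μ hw g hC0 hC)

theorem wtOp_apply (F : Lp H 2 μ) : wtOp μ hw g hC0 hC F = wtOp0 μ hw g hC F := rfl

theorem wtOp_norm : ‖(wtOp μ hw g hC0 hC : Lp H 2 μ →L[ℂ] Lp H 2 μ)‖ ≤ C :=
  LinearMap.mkContinuous_norm_le _ hC0 _

theorem wtOp_toLp {F : G → H} (hF : MemLp F 2 μ) {F' : G → H} (hF' : MemLp F' 2 μ)
    (key : (fun z => w z • F (g⁻¹ * z)) =ᵐ[μ] F') :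
    wtOp μ hw g hC0 hC (hF.toLp F) = hF'.toLp F' := by
  rw [wtOp_apply]
  exact MemLp.toLp_congr _ _ ((tfun_congr_ae μ w g hF.coeFn_toLp).trans key)

end Aux

open Filter Topology Pointwise

set_option maxHeartbeats 2000000 in
/-- Lemma 2 of the paper: with `h(z) = e^{-c·d(z,e)}/N` for `c > b` and
`R'(x)(z) = √(h z) • R(z⁻¹x)`, letting `K_R` be the closed linear span of
`{R'(x) : x ∈ G}` in `L²(G,H,μ)`, there exists a unique representation `π_R` of `G`
on `K_R` with `π_R(g) R'(x) = R'(gx)`; it is strongly continuous and satisfies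
`‖π_R(g)‖ ≤ e^{(c/2)·d(g,e)}`. -/
theorem stmt_7 {G : Type*} [Group G] [TopologicalSpace G] [IsTopologicalGroup G]
    [LocallyCompactSpace G] [SecondCountableTopology G] [MeasurableSpace G] [BorelSpace G]
    (μ : Measure G) [μ.IsHaarMeasure]
    (d : G → G → ℝ)
    (hd_self : ∀ x y : G, d x y = 0 ↔ x = y)
    (hd_symm : ∀ x y : G, d x y = d y x)
    (hd_tri : ∀ x y z : G, d x z ≤ d x y + d y z)
    (hd_inv : ∀ g x y : G, d (g * x) (g * y) = d x y)
    (hd_meas : Measurable fun z : G => d z 1)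
    (a b : ℝ) (ha : 0 < a) (hb : 0 < b)
    (hgrowth : ∀ n : ℕ, 1 ≤ n →
      μ {g : G | d g 1 < (n : ℝ)} ≤ ENNReal.ofReal (a * Real.exp (b * n)))
    (c : ℝ) (hc : b < c)
    (N : ℝ) (hN : N = ∫ x, Real.exp (-c * d x 1) ∂μ) (hN_pos : 0 < N)
    (h : G → ℝ) (hdef : ∀ z : G, h z = Real.exp (-c * d z 1) / N)
    {H : Type*} [NormedAddCommGroup H] [InnerProductSpace ℂ H] [CompleteSpace H]
    (R : G → H) (hR_cont : Continuous R) (hR_bdd : BddAbove (Set.range fun g => ‖R g‖)) :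
    ∃ hmem : ∀ x : G, MemLp (fun z => Real.sqrt (h z) • R (z⁻¹ * x)) 2 μ,
      let R' : G → Lp H 2 μ := fun x => (hmem x).toLp (fun z => Real.sqrt (h z) • R (z⁻¹ * x))
      let K : Submodule ℂ (Lp H 2 μ) := (Submodule.span ℂ (Set.range R')).topologicalClosure
      ∃ hK : ∀ x : G, R' x ∈ K,
      ∃ π : G →* (K ≃L[ℂ] K),
        (∀ g x : G, π g ⟨R' x, hK x⟩ = ⟨R' (g * x), hK (g * x)⟩) ∧
        (∀ g : G, ‖((π g).toContinuousLinearMap)‖ ≤ Real.exp (c / 2 * d g 1)) ∧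
        (∀ ξ : K, Continuous fun g : G => ((π g ξ : K) : Lp H 2 μ)) ∧
        ∀ π' : G →* (K ≃L[ℂ] K),
          (∀ g x : G, π' g ⟨R' x, hK x⟩ = ⟨R' (g * x), hK (g * x)⟩) → π' = π := by
  have hc0 : 0 < c := hb.trans hc
  have hc2 : (0:ℝ) ≤ c / 2 := by linarith
  -- metric basics
  have hd_nonneg : ∀ x y : G, 0 ≤ d x y := by
    intro x y
    have h1 : d x x ≤ d x y + d y x := hd_tri x y x
    have h2 : d x x = 0 := (hd_self x x).2 rfl
    have h3 : d y x = d x y := hd_symm y x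
    linarith
  set f : G → ℝ := fun z => d z 1 with hfdef
  have hf_meas : Measurable f := hd_meas
  have hf_one : f 1 = 0 := (hd_self 1 1).2 rfl
  have hf_inv : ∀ x : G, f x⁻¹ = f x := by
    intro x
    show d x⁻¹ 1 = d x 1
    calc d x⁻¹ 1 = d (x * x⁻¹) (x * 1) := (hd_inv x x⁻¹ 1).symm
      _ = d 1 x := by rw [mul_inv_cancel, mul_one]
      _ = d x 1 := hd_symm 1 x
  have hf_sub : ∀ x y : G, f (x * y) ≤ f x + f y := by
    intro x y
    show d (x * y) 1 ≤ d x 1 + d y 1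
    have h1 : d (x * y) 1 ≤ d (x * y) x + d x 1 := hd_tri _ x _
    have h2 : d (x * y) x = d y 1 := by
      calc d (x * y) x = d (x * y) (x * 1) := by rw [mul_one]
        _ = d y 1 := hd_inv x y 1
    linarith
  -- integrability of the weight
  have hexp_meas : Measurable fun z : G => Real.exp (-c * f z) :=
    (hf_meas.const_mul (-c)).exp
  have hint : Integrable (fun x => Real.exp (-c * f x)) μ := by
    by_contra hni
    rw [MeasureTheory.integral_undef hni] at hN
    exact absurd hN hN_pos.ne'
  have hh_eq : h = fun z => Real.exp (-c * f z) / N := funext hdef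
  have hh_meas : Measurable h := by rw [hh_eq]; exact hexp_meas.div_const N
  have hh_pos : ∀ z, 0 < h z := fun z => by
    rw [hdef]; exact div_pos (Real.exp_pos _) hN_pos
  have hh_int : Integrable h μ := by rw [hh_eq]; exact hint.div_const N
  -- bound for R
  obtain ⟨M, hM⟩ := hR_bdd
  have hM' : ∀ g : G, ‖R g‖ ≤ M := fun g => hM ⟨g, rfl⟩
  have hM0 : 0 ≤ M := (norm_nonneg _).trans (hM' 1)
  -- square root of h
  have hNs : 0 < Real.sqrt N := Real.sqrt_pos.2 hN_pos
  have hsq : ∀ z, Real.sqrt (h z) = Real.exp (c / 2 * (-f z)) / Real.sqrt N := by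
    intro z
    rw [hdef, Real.sqrt_div (Real.exp_nonneg _), ← Real.exp_half]
    ring_nf
    exact mul_comm _ _
  have hsqrt_meas : Measurable fun z => Real.sqrt (h z) :=
    Real.continuous_sqrt.measurable.comp hh_meas
  -- membership in L²
  have hsqmem : MemLp (fun z => Real.sqrt (h z)) 2 μ := by
    refine (memLp_two_iff_integrable_sq hsqrt_meas.aestronglyMeasurable).2 ?_
    refine hh_int.congr ?_
    exact Filter.Eventually.of_forall fun z => (Real.sq_sqrt (hh_pos z).le).symm
  have hmem : ∀ x : G, MemLp (fun z => Real.sqrt (h z) • R (z⁻¹ * x)) 2 μ := by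
    intro x
    have hRx : Continuous fun z : G => R (z⁻¹ * x) :=
      hR_cont.comp (continuous_inv.mul continuous_const)
    refine MemLp.of_le (hsqmem.const_mul M) (hsqrt_meas.aestronglyMeasurable.smul
      hRx.aestronglyMeasurable) (Filter.Eventually.of_forall fun z => ?_)
    rw [norm_smul, Real.norm_eq_abs, abs_of_nonneg (Real.sqrt_nonneg _), Real.norm_eq_abs,
      abs_of_nonneg (by positivity)]
    rw [mul_comm M]
    exact mul_le_mul_of_nonneg_left (hM' _) (Real.sqrt_nonneg _)
  refine ⟨hmem, ?_⟩
  intro R' K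
  have hK : ∀ x : G, R' x ∈ K := fun x =>
    Submodule.le_topologicalClosure _ (Submodule.subset_span ⟨x, rfl⟩)
  refine ⟨hK, ?_⟩
  -- the weight and the weighted translation operators
  set w : G → G → ℝ := fun g z => Real.exp (c / 2 * (f (g⁻¹ * z) - f z)) with hwdef
  have hw_meas : ∀ g : G, Measurable (w g) := fun g =>
    (((hf_meas.comp (measurable_const_mul g⁻¹)).sub hf_meas).const_mul (c / 2)).exp
  set CB : G → ℝ := fun g => Real.exp (c / 2 * f g) with hCBdef
  have hCB0 : ∀ g, (0:ℝ) ≤ CB g := fun g => (Real.exp_pos _).le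
  have hCb : ∀ g z, |w g z| ≤ CB g := by
    intro g z
    rw [abs_of_pos (Real.exp_pos _)]
    apply Real.exp_le_exp.2
    apply mul_le_mul_of_nonneg_left _ hc2
    have h1 : f (g⁻¹ * z) ≤ f g⁻¹ + f z := hf_sub g⁻¹ z
    rw [hf_inv] at h1
    linarith
  set T : G → (Lp H 2 μ →L[ℂ] Lp H 2 μ) :=
    fun g => wtOp μ (hw_meas g) g (hCB0 g) (hCb g) with hTdef
  have hT_coe : ∀ (g : G) (F : Lp H 2 μ),
      (T g F : G → H) =ᵐ[μ] fun z => w g z • (F : G → H) (g⁻¹ * z) := fun g F =>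
    wtOp0_coeFn μ (hw_meas g) g (hCb g) F
  have hT_norm : ∀ g : G, ‖T g‖ ≤ CB g := fun g =>
    wtOp_norm μ (hw_meas g) g (hCB0 g) (hCb g)
  -- cocycle identities
  have hw_one : ∀ z, w 1 z = 1 := by
    intro z; rw [hwdef]; simp
  have hw_mul : ∀ g g' z, w g z * w g' (g⁻¹ * z) = w (g * g') z := by
    intro g g' z
    rw [hwdef]
    simp only
    rw [← Real.exp_add, mul_inv_rev, mul_assoc]
    ring_nf
  have hT_one : ∀ F, T 1 F = F := by
    intro F
    refine Lp.ext ((hT_coe 1 F).trans ?_)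
    exact Filter.Eventually.of_forall fun z => by simp [hw_one z]
  have hT_mul : ∀ (g g' : G) (F : Lp H 2 μ), T g (T g' F) = T (g * g') F := by
    intro g g' F
    refine Lp.ext (((hT_coe g (T g' F)).trans ?_).trans (hT_coe (g * g') F).symm)
    have h1 := tfun_congr_ae μ (w g) g (hT_coe g' F)
    refine h1.trans (Filter.Eventually.of_forall fun z => ?_)
    simp only [smul_smul, hw_mul g g' z, mul_inv_rev, mul_assoc]
  have hT_R' : ∀ g x : G, T g (R' x) = R' (g * x) := by
    intro g x
    refine wtOp_toLp μ (hw_meas g) g (hCB0 g) (hCb g) (hmem x) (hmem (g * x)) ?_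
    refine Filter.Eventually.of_forall fun z => ?_
    show w g z • Real.sqrt (h (g⁻¹ * z)) • R ((g⁻¹ * z)⁻¹ * x)
      = Real.sqrt (h z) • R (z⁻¹ * (g * x))
    rw [smul_smul]
    have h1 : w g z * Real.sqrt (h (g⁻¹ * z)) = Real.sqrt (h z) := by
      rw [hsq, hsq, hwdef]
      simp only
      rw [← mul_div_assoc, ← Real.exp_add]
      congr 2
      ring
    rw [h1]
    congr 1
    rw [mul_inv_rev, inv_inv, mul_assoc]
  -- K is invariant
  have hTK : ∀ g : G, ∀ v ∈ K, T g v ∈ K := by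
    intro g v hv
    have hmapsto : Set.MapsTo (T g) (Submodule.span ℂ (Set.range R') : Set (Lp H 2 μ))
        (Submodule.span ℂ (Set.range R') : Set (Lp H 2 μ)) := by
      intro u hu
      refine Submodule.span_induction (fun y hy => ?_) ?_ (fun y y' _ _ hy hy' => ?_)
        (fun m y _ hy => ?_) hu
      · obtain ⟨x, rfl⟩ := hy
        rw [hT_R']
        exact Submodule.subset_span ⟨g * x, rfl⟩
      · simpa using Submodule.zero_mem _
      · simpa [map_add] using Submodule.add_mem _ hy hy'
      · simpa [_root_.map_smul] using Submodule.smul_mem _ m hy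
    have hclos := hmapsto.closure (T g).continuous
    have hv' : v ∈ closure (Submodule.span ℂ (Set.range R') : Set (Lp H 2 μ)) := by
      rwa [← Submodule.topologicalClosure_coe]
    have := hclos hv'
    rwa [← Submodule.topologicalClosure_coe] at this
  -- restriction of T g to K
  set A : G → (K →L[ℂ] K) := fun g =>
    { toLinearMap := (T g).toLinearMap.restrict (hTK g)
      cont := (((T g).continuous.comp continuous_subtype_val).subtype_mk _ : _) } with hAdef
  have hA_coe : ∀ (g : G) (ξ : K), (A g ξ : Lp H 2 μ) = T g (ξ : Lp H 2 μ) := fun g ξ => rfl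
  have hA_inv : ∀ (g : G) (ξ : K), A g⁻¹ (A g ξ) = ξ := by
    intro g ξ
    refine Subtype.ext ?_
    rw [hA_coe, hA_coe, hT_mul, inv_mul_cancel, hT_one]
  have hA_inv' : ∀ (g : G) (ξ : K), A g (A g⁻¹ ξ) = ξ := by
    intro g ξ
    refine Subtype.ext ?_
    rw [hA_coe, hA_coe, hT_mul, mul_inv_cancel, hT_one]
  set Pi : G → (K ≃L[ℂ] K) := fun g =>
    ContinuousLinearEquiv.equivOfInverse (A g) (A g⁻¹) (hA_inv g) (hA_inv' g) with hPidef
  have hPi_coe : ∀ (g : G) (ξ : K), ((Pi g ξ : K) : Lp H 2 μ) = T g (ξ : Lp H 2 μ) :=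
    fun g ξ => rfl
  set π : G →* (K ≃L[ℂ] K) :=
    { toFun := Pi
      map_one' := by
        refine ContinuousLinearEquiv.ext (funext fun ξ => ?_)
        refine Subtype.ext ?_
        rw [hPi_coe]
        rw [hT_one]
        rfl
      map_mul' := by
        intro g g'
        refine ContinuousLinearEquiv.ext (funext fun ξ => ?_)
        refine Subtype.ext ?_
        rw [hPi_coe]
        have : ((Pi g * Pi g') ξ : K) = Pi g (Pi g' ξ) := rfl
        rw [this, hPi_coe, hPi_coe, hT_mul] } with hπdef
  refine ⟨π, ?_, ?_, ?_, ?_⟩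
  · intro g x
    exact Subtype.ext (hT_R' g x)
  · -- norm bound
    intro g
    refine ContinuousLinearMap.opNorm_le_bound _ (hCB0 g) fun ξ => ?_
    have h1 : ‖(π g).toContinuousLinearMap ξ‖ = ‖T g (ξ : Lp H 2 μ)‖ := rfl
    rw [h1]
    calc ‖T g (ξ : Lp H 2 μ)‖ ≤ ‖T g‖ * ‖(ξ : Lp H 2 μ)‖ := (T g).le_opNorm _
      _ ≤ CB g * ‖ξ‖ := by
          refine mul_le_mul (hT_norm g) ?_ (norm_nonneg _) (hCB0 g)
          rfl
  · -- strong continuity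
    -- continuity of R'
    have hpow2 : ∀ t : ℝ, t ^ (2:ℝ) = t ^ 2 := fun t => by
      rw [show (2:ℝ) = ((2:ℕ):ℝ) by norm_num, Real.rpow_natCast]
    have hdiff_eq : ∀ x y : G, ‖R' y - R' x‖
        = (∫ z, ‖Real.sqrt (h z) • R (z⁻¹ * y) - Real.sqrt (h z) • R (z⁻¹ * x)‖ ^ 2 ∂μ)
          ^ (2⁻¹:ℝ) := by
      intro x y
      have hmemsub : MemLp ((fun z => Real.sqrt (h z) • R (z⁻¹ * y))
          - (fun z => Real.sqrt (h z) • R (z⁻¹ * x))) 2 μ := (hmem y).sub (hmem x)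
      have h1 : R' y - R' x = hmemsub.toLp _ := (MemLp.toLp_sub (hmem y) (hmem x))
      rw [h1, Lp.norm_toLp, MemLp.eLpNorm_eq_integral_rpow_norm two_ne_zero ENNReal.ofNat_ne_top
        hmemsub]
      rw [ENNReal.toReal_ofReal (by positivity)]
      norm_num [hpow2]
    have hR'_cont : Continuous R' := by
      rw [continuous_iff_continuousAt]
      intro x
      rw [ContinuousAt, tendsto_iff_dist_tendsto_zero]
      have hI : Tendsto (fun y => ∫ z,
          ‖Real.sqrt (h z) • R (z⁻¹ * y) - Real.sqrt (h z) • R (z⁻¹ * x)‖ ^ 2 ∂μ)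
          (𝓝 x) (𝓝 0) := by
        have h0 : (0:ℝ) = ∫ _z : G, (0:ℝ) ∂μ := by simp
        rw [h0]
        refine tendsto_integral_filter_of_dominated_convergence
          (bound := fun z => h z * (2*M)^2) ?_ ?_ ?_ ?_
        · refine Filter.Eventually.of_forall fun y => ?_
          exact ((((hmem y).sub (hmem x)).1.norm.aemeasurable.pow_const 2).aestronglyMeasurable)
        · refine Filter.Eventually.of_forall fun y => ?_
          refine Filter.Eventually.of_forall fun z => ?_
          have hz1 : ‖Real.sqrt (h z) • R (z⁻¹ * y) - Real.sqrt (h z) • R (z⁻¹ * x)‖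
              ≤ Real.sqrt (h z) * (2*M) := by
            rw [← smul_sub, norm_smul, Real.norm_eq_abs,
              abs_of_nonneg (Real.sqrt_nonneg _)]
            refine mul_le_mul_of_nonneg_left ?_ (Real.sqrt_nonneg _)
            calc ‖R (z⁻¹ * y) - R (z⁻¹ * x)‖ ≤ ‖R (z⁻¹ * y)‖ + ‖R (z⁻¹ * x)‖ :=
                  norm_sub_le _ _
              _ ≤ M + M := add_le_add (hM' _) (hM' _)
              _ = 2*M := by ring
          rw [Real.norm_eq_abs, abs_of_nonneg (by positivity)]
          calc ‖Real.sqrt (h z) • R (z⁻¹ * y) - Real.sqrt (h z) • R (z⁻¹ * x)‖ ^ 2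
              ≤ (Real.sqrt (h z) * (2*M)) ^ 2 := by
                refine pow_le_pow_left₀ (norm_nonneg _) hz1 2
            _ = h z * (2*M)^2 := by
                rw [mul_pow, Real.sq_sqrt (hh_pos z).le]
        · exact hh_int.mul_const ((2*M)^2)
        · refine Filter.Eventually.of_forall fun z => ?_
          have h2 : Tendsto (fun y : G => R (z⁻¹ * y)) (𝓝 x) (𝓝 (R (z⁻¹ * x))) := by
            refine (hR_cont.tendsto _).comp ?_
            exact (continuous_const.mul continuous_id).tendsto x
          have h3 := ((h2.const_smul (Real.sqrt (h z))).sub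
            (tendsto_const_nhds (x := Real.sqrt (h z) • R (z⁻¹ * x)))).norm.pow 2
          simpa using h3
      have h4 := hI.rpow_const (p := (2⁻¹:ℝ)) (Or.inr (by norm_num))
      rw [Real.zero_rpow (by norm_num)] at h4
      refine Filter.Tendsto.congr (fun y => ?_) h4
      rw [dist_eq_norm, hdiff_eq x y]
    -- Steinhaus: local bound on f
    obtain ⟨n, hn⟩ : ∃ n : ℕ, 0 < μ {z : G | f z < n} := by
      by_contra hno
      push_neg at hno
      have h1 : ∀ n : ℕ, μ {z : G | f z < n} = 0 := fun n =>
        le_antisymm (hno n) (by positivity)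
      have h2 : μ (⋃ n : ℕ, {z : G | f z < n}) = 0 := measure_iUnion_null h1
      have h3 : (⋃ n : ℕ, {z : G | f z < n}) = Set.univ := by
        ext z
        simp only [Set.mem_iUnion, Set.mem_setOf_eq, Set.mem_univ, iff_true]
        exact exists_nat_gt (f z)
      rw [h3] at h2
      have h4 : (0:ENNReal) < μ Set.univ := isOpen_univ.measure_pos μ ⟨1, trivial⟩
      rw [h2] at h4
      exact lt_irrefl _ h4
    have hE_meas : MeasurableSet {z : G | f z < n} := hf_meas measurableSet_Iio
    have hU : {z : G | f z < n} / {z : G | f z < n} ∈ 𝓝 (1:G) :=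
      Measure.div_mem_nhds_one_of_haar_pos μ _ hE_meas hn
    have hUb : ∀ s ∈ {z : G | f z < n} / {z : G | f z < n}, f s ≤ 2 * n := by
      intro s hs
      rw [Set.mem_div] at hs
      obtain ⟨p, hp, q, hq, rfl⟩ := hs
      rw [div_eq_mul_inv]
      have h1 : f (p * q⁻¹) ≤ f p + f q⁻¹ := hf_sub p q⁻¹
      rw [hf_inv] at h1
      have hp' : f p < n := hp
      have hq' : f q < n := hq
      have hfq : 0 ≤ f q := hd_nonneg q 1
      have hfp : 0 ≤ f p := hd_nonneg p 1
      push_cast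
      linarith
    set CU : ℝ := Real.exp (c/2 * (2*n)) with hCUdef
    have hCU0 : 0 < CU := Real.exp_pos _
    have hlocb : ∀ s ∈ {z : G | f z < n} / {z : G | f z < n}, ‖T s‖ ≤ CU := by
      intro s hs
      refine (hT_norm s).trans ?_
      rw [hCUdef, hCBdef]
      exact Real.exp_le_exp.2 (mul_le_mul_of_nonneg_left (hUb s hs) hc2)
    -- tendsto at 1 on the span
    have htends_gen : ∀ v ∈ Submodule.span ℂ (Set.range R'),
        Tendsto (fun s : G => T s v) (𝓝 1) (𝓝 v) := by
      intro v hv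
      refine Submodule.span_induction ?_ ?_ ?_ ?_ hv
      · rintro u ⟨x, rfl⟩
        have h1 : (fun s : G => T s (R' x)) = fun s : G => R' (s * x) := by
          funext s; exact hT_R' s x
        rw [h1]
        have h2 : Tendsto (fun s : G => s * x) (𝓝 1) (𝓝 x) := by
          have h3 := (continuous_id.mul (continuous_const (y := x))).tendsto (1:G)
          simpa [_root_.Pi.mul_def] using h3
        exact (hR'_cont.tendsto x).comp h2
      · simpa using (tendsto_const_nhds : Tendsto (fun _ : G => (0 : Lp H 2 μ)) (𝓝 1) _)
      · intro u u' _ _ hu hu'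
        simpa [map_add] using hu.add hu'
      · intro m u _ hu
        simpa [_root_.map_smul] using hu.const_smul m
    -- tendsto at 1 on the closure
    have htends : ∀ v ∈ K, Tendsto (fun s : G => T s v) (𝓝 1) (𝓝 v) := by
      intro v hv
      rw [Metric.tendsto_nhds]
      intro ε hε
      set δ : ℝ := ε / (2 * CU + 4) with hδdef
      have hδ0 : 0 < δ := by positivity
      have hv' : v ∈ closure (Submodule.span ℂ (Set.range R') : Set (Lp H 2 μ)) := by
        rwa [← Submodule.topologicalClosure_coe]
      obtain ⟨u, hu_mem, hu_close⟩ := Metric.mem_closure_iff.1 hv' δ hδ0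
      have h1 := htends_gen u hu_mem
      rw [Metric.tendsto_nhds] at h1
      filter_upwards [h1 δ hδ0, hU] with s hs1 hs2
      have hb1 : ‖T s v - T s u‖ ≤ CU * ‖v - u‖ := by
        rw [← map_sub]
        calc ‖T s (v - u)‖ ≤ ‖T s‖ * ‖v - u‖ := (T s).le_opNorm _
          _ ≤ CU * ‖v - u‖ :=
            mul_le_mul_of_nonneg_right (hlocb s hs2) (norm_nonneg _)
      have hd1 : dist v u < δ := hu_close
      have hd2 : dist (T s u) u < δ := hs1
      have e0 : dist (T s v) v ≤ dist (T s v) (T s u) + dist (T s u) u + dist u v :=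
        dist_triangle4 _ _ _ _
      have e1 : dist (T s v) (T s u) ≤ CU * dist v u := by
        rw [dist_eq_norm, dist_eq_norm]
        exact hb1
      have e2 : dist u v = dist v u := dist_comm u v
      have e3 : (2 * CU + 4) * δ = ε := by
        rw [hδdef]
        field_simp
      nlinarith [dist_nonneg (x := v) (y := u)]
    -- conclude strong continuity
    intro ξ
    rw [continuous_iff_continuousAt]
    intro g₀
    have heq : ∀ g : G, ((π g ξ : K) : Lp H 2 μ) = T g₀ (T (g₀⁻¹ * g) (ξ : Lp H 2 μ)) := by
      intro g
      have h1 : ((π g ξ : K) : Lp H 2 μ) = T g (ξ : Lp H 2 μ) := hPi_coe g ξ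
      rw [h1, hT_mul, mul_inv_cancel_left]
    have h2 : Tendsto (fun g : G => g₀⁻¹ * g) (𝓝 g₀) (𝓝 1) := by
      have h3 := (continuous_const.mul continuous_id :
        Continuous fun g : G => g₀⁻¹ * g).tendsto g₀
      simpa [_root_.Pi.mul_def] using h3
    have h3 := (htends (ξ : Lp H 2 μ) ξ.2).comp h2
    have h4 := ((T g₀).continuous.tendsto _).comp h3
    rw [ContinuousAt]
    simp only [heq]
    simp only [Function.comp_def] at h4
    rw [inv_mul_cancel, hT_one]
    exact h4
  · -- uniqueness
    intro π' hπ'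
    have hπgen : ∀ g x : G, π g ⟨R' x, hK x⟩ = ⟨R' (g * x), hK (g * x)⟩ :=
      fun g x => Subtype.ext (hT_R' g x)
    refine MonoidHom.ext fun g => ?_
    refine ContinuousLinearEquiv.ext (funext fun ξ => ?_)
    have hdense : Dense
        ((Submodule.span ℂ (Set.range fun x => (⟨R' x, hK x⟩ : K))) : Set K) := by
      intro ζ
      rw [closure_subtype]
      have h1 : Submodule.map K.subtype
          (Submodule.span ℂ (Set.range fun x => (⟨R' x, hK x⟩ : K)))
          = Submodule.span ℂ (Set.range R') := by
        rw [Submodule.map_span]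
        congr 1
        ext v
        constructor
        · rintro ⟨u, ⟨x, rfl⟩, rfl⟩
          exact ⟨x, rfl⟩
        · rintro ⟨x, rfl⟩
          exact ⟨⟨R' x, hK x⟩, ⟨x, rfl⟩, rfl⟩
      have himg : (Subtype.val ''
          ((Submodule.span ℂ (Set.range fun x => (⟨R' x, hK x⟩ : K))) : Set K))
          = (Submodule.span ℂ (Set.range R') : Set (Lp H 2 μ)) := by
        rw [← h1]
        rfl
      rw [himg]
      have h2 : (ζ : Lp H 2 μ) ∈ K := ζ.2
      rwa [← Submodule.topologicalClosure_coe]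
    have hcont1 : Continuous fun ζ : K => ((π' g ζ : K) : Lp H 2 μ) :=
      continuous_subtype_val.comp (π' g).continuous
    have hcont2 : Continuous fun ζ : K => ((π g ζ : K) : Lp H 2 μ) :=
      continuous_subtype_val.comp (π g).continuous
    have heqon : Set.EqOn (fun ζ : K => ((π' g ζ : K) : Lp H 2 μ))
        (fun ζ : K => ((π g ζ : K) : Lp H 2 μ))
        ((Submodule.span ℂ (Set.range fun x => (⟨R' x, hK x⟩ : K))) : Set K) := by
      intro ζ hζ
      refine Submodule.span_induction ?_ ?_ ?_ ?_ hζ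
      · rintro u ⟨x, rfl⟩
        show ((π' g ⟨R' x, hK x⟩ : K) : Lp H 2 μ) = ((π g ⟨R' x, hK x⟩ : K) : Lp H 2 μ)
        rw [hπ' g x, hπgen g x]
      · show ((π' g 0 : K) : Lp H 2 μ) = ((π g 0 : K) : Lp H 2 μ)
        rw [map_zero, map_zero]
      · intro u u' _ _ hu hu'
        show ((π' g (u + u') : K) : Lp H 2 μ) = ((π g (u + u') : K) : Lp H 2 μ)
        rw [map_add, map_add, Submodule.coe_add, Submodule.coe_add]
        exact congrArg₂ (· + ·) hu hu'
      · intro m u _ hu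
        show ((π' g (m • u) : K) : Lp H 2 μ) = ((π g (m • u) : K) : Lp H 2 μ)
        rw [_root_.map_smul, _root_.map_smul, Submodule.coe_smul, Submodule.coe_smul]
        exact congrArg (m • ·) hu
    have hfin := Continuous.ext_on hdense hcont1 hcont2 heqon
    exact Subtype.ext (congrFun hfin ξ)
end

section
/- Let G be a group, H a Hilbert space, π a representation of G on H, K ⊆ H a π-invariant closed subspace containing vectors P'(x) with π(g)P'(x) = P'(gx), and let Q' : G → H satisfy ⟨P'(x), Q'(y)⟩ = φ(y⁻¹x) for all x, y ∈ G, where φ : G → ℂ. Let P_K be the orthogonal projection onto K, and set η = P_K Q'(e). Then for every y ∈ G, the restriction of π(y⁻¹)* to K satisfies π(y⁻¹)* η = P_K Q'(y), and consequently ‖π(y⁻¹)*η‖ ≤ ‖Q'(y)‖. -/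
/-- Let `K` be the closed linear span of `{P'(x) : x ∈ G}`, invariant under a
representation `π_K` of `G` on `K` with `π_K(g) P'(x) = P'(gx)`, and suppose
`⟨P'(x), Q'(y)⟩ = φ(y⁻¹x)`. With `η = P_K Q'(e)`, one has
`π_K(y⁻¹)* η = P_K Q'(y)` for every `y`, and hence `‖π_K(y⁻¹)* η‖ ≤ ‖Q'(y)‖`.
(The paper's first-variable-linear inner product `⟨u,v⟩` is Mathlib's `inner ℂ v u`.) -/
theorem stmt_12 {G : Type*} [Group G]
    {H : Type*} [NormedAddCommGroup H] [InnerProductSpace ℂ H] [CompleteSpace H]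
    (P' Q' : G → H) (φ : G → ℂ)
    (hPQ : ∀ x y : G, (inner ℂ (Q' y) (P' x) : ℂ) = φ (y⁻¹ * x))
    (K : Submodule ℂ H)
    (hKdef : K = (Submodule.span ℂ (Set.range P')).topologicalClosure)
    (hmem : ∀ x : G, P' x ∈ K) [CompleteSpace K]
    (πK : G →* (K ≃L[ℂ] K))
    (hπ : ∀ g x : G, πK g ⟨P' x, hmem x⟩ = ⟨P' (g * x), hmem (g * x)⟩) :
    ∀ y : G,
      ContinuousLinearMap.adjoint ((πK y⁻¹).toContinuousLinearMap)
          (K.orthogonalProjectionOnto (Q' 1))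
        = K.orthogonalProjectionOnto (Q' y) ∧
      ‖ContinuousLinearMap.adjoint ((πK y⁻¹).toContinuousLinearMap)
          (K.orthogonalProjectionOnto (Q' 1))‖ ≤ ‖Q' y‖ := by
  intro y
  set A := (πK y⁻¹).toContinuousLinearMap with hA
  set u : K := ContinuousLinearMap.adjoint A (K.orthogonalProjectionOnto (Q' 1)) with hu
  set v : K := K.orthogonalProjectionOnto (Q' y) with hv
  have key : ∀ x : G, (inner ℂ u (⟨P' x, hmem x⟩ : K) : ℂ)
      = inner ℂ v (⟨P' x, hmem x⟩ : K) := by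
    intro x
    have h1 : (inner ℂ u (⟨P' x, hmem x⟩ : K) : ℂ)
        = inner ℂ (K.orthogonalProjectionOnto (Q' 1)) (A ⟨P' x, hmem x⟩) :=
      ContinuousLinearMap.adjoint_inner_left A _ _
    have h2 : A (⟨P' x, hmem x⟩ : K) = ⟨P' (y⁻¹ * x), hmem (y⁻¹ * x)⟩ := hπ y⁻¹ x
    rw [h1, h2]
    have h3 : (inner ℂ (K.orthogonalProjectionOnto (Q' 1))
        (⟨P' (y⁻¹ * x), hmem (y⁻¹ * x)⟩ : K) : ℂ) = inner ℂ (Q' 1) (P' (y⁻¹ * x)) := by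
      rw [Submodule.inner_orthogonalProjectionOnto_eq_of_mem_right]
    have h4 : (inner ℂ v (⟨P' x, hmem x⟩ : K) : ℂ) = inner ℂ (Q' y) (P' x) := by
      rw [hv, Submodule.inner_orthogonalProjectionOnto_eq_of_mem_right]
    rw [h3, h4, hPQ, hPQ, inv_one, one_mul]
  -- the difference is orthogonal to K
  have hw : ((u - v : K) : H) ∈ Kᗮ := by
    have horth : ((u - v : K) : H) ∈ (Submodule.span ℂ (Set.range P'))ᗮ := by
      intro z hz
      induction hz using Submodule.span_induction with
      | mem z hz =>
        obtain ⟨x, rfl⟩ := hz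
        have := key x
        have h5 : (inner ℂ (u - v) (⟨P' x, hmem x⟩ : K) : ℂ) = 0 := by
          rw [inner_sub_left, this, sub_self]
        have h6 : (inner ℂ ((u - v : K) : H) (P' x) : ℂ) = 0 := h5
        rw [← inner_conj_symm, h6, map_zero]
      | zero => simp
      | add a b _ _ ha hb => rw [inner_add_left, ha, hb, add_zero]
      | smul c a _ ha => rw [inner_smul_left, ha, mul_zero]
    have : Kᗮ = (Submodule.span ℂ (Set.range P'))ᗮ := by
      rw [hKdef, ← Submodule.orthogonal_orthogonal_eq_closure,
        Submodule.triorthogonal_eq_orthogonal]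
    rw [this]
    exact horth
  have huv : u = v := by
    have hmemK : ((u - v : K) : H) ∈ K := (u - v).2
    have : ((u - v : K) : H) = 0 := by
      have := Submodule.mem_orthogonal K ((u - v : K) : H) |>.mp hw _ hmemK
      exact inner_self_eq_zero.mp this
    have : (u - v : K) = 0 := Subtype.ext this
    exact sub_eq_zero.mp this
  constructor
  · exact huv
  · rw [huv, hv]
    calc ‖K.orthogonalProjectionOnto (Q' y)‖ ≤ ‖K.orthogonalProjectionOnto‖ * ‖Q' y‖ :=
          (K.orthogonalProjectionOnto).le_opNorm _
      _ ≤ 1 * ‖Q' y‖ := by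
          gcongr; exact Submodule.orthogonalProjectionOnto_norm_le K
      _ = ‖Q' y‖ := one_mul _
end
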